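/- arXiv:2305.12872 — 2 statements merged into one kernel-verified Lean document; each statement's English description precedes it below -/
import Mathlib

section
/- Let Z be a nonempty finite type, let γ be a real number with 0 ≤ γ < 1, and let Π and Π̂ be nonempty types. Let r : Π → Π̂ → Z → ℝ be uniformly bounded, and let P : Π → Π̂ → Z → Z → ℝ satisfy P π π̂ z z' ≥ 0 and ∑_{z'} P π π̂ z z' = 1 for all π, π̂, z. Define T : (Z → ℝ) → (Z → ℝ) by (T Q)(z) = ⨆_{π} ⨅_{π̂} ( r π π̂ z + γ · ∑_{z'} P π π̂ z z' · Q z' ). Then there exists a unique Q* : Z → ℝ with T Q* = Q*, and for every Q : Z → ℝ and every n ∈ ℕ, max_{z ∈ Z} |T^[n] Q z − Q* z| ≤ γⁿ · max_{z ∈ Z} |Q z − Q* z|; in particular the iterates T^[n] Q converge to Q*. -/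
/-- One-sided Lipschitz estimate for the robust Harsanyi–Bellman operator. -/
theorem aux_key_rhb {Z : Type*} [Fintype Z] [Nonempty Z]
    {Pol Adv : Type*} [Nonempty Pol] [Nonempty Adv]
    (γ : ℝ) (hγ0 : 0 ≤ γ)
    (r : Pol → Adv → Z → ℝ) (C : ℝ)
    (hr : ∀ p q z, |r p q z| ≤ C)
    (P : Pol → Adv → Z → Z → ℝ)
    (hP0 : ∀ p q z z', 0 ≤ P p q z z')
    (hP1 : ∀ p q z, ∑ z' : Z, P p q z z' = 1)
    (Q Q' : Z → ℝ) (z : Z) :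
    (⨆ p : Pol, ⨅ q : Adv, (r p q z + γ * ∑ z' : Z, P p q z z' * Q z')) -
    (⨆ p : Pol, ⨅ q : Adv, (r p q z + γ * ∑ z' : Z, P p q z z' * Q' z')) ≤
      γ * dist Q Q' := by
  set f : Pol → Adv → ℝ := fun p q => r p q z + γ * ∑ z' : Z, P p q z z' * Q z' with hf
  set g : Pol → Adv → ℝ := fun p q => r p q z + γ * ∑ z' : Z, P p q z z' * Q' z' with hg
  -- uniform bounds
  have hbound : ∀ (Q₀ : Z → ℝ) (p : Pol) (q : Adv),
      |r p q z + γ * ∑ z' : Z, P p q z z' * Q₀ z'| ≤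
        C + γ * (Finset.univ.sup' Finset.univ_nonempty fun z' : Z => |Q₀ z'|) := by
    intro Q₀ p q
    have h1 : |∑ z' : Z, P p q z z' * Q₀ z'| ≤
        Finset.univ.sup' Finset.univ_nonempty fun z' : Z => |Q₀ z'| := by
      calc |∑ z' : Z, P p q z z' * Q₀ z'| ≤ ∑ z' : Z, |P p q z z' * Q₀ z'| :=
            Finset.abs_sum_le_sum_abs _ _
        _ ≤ ∑ z' : Z, P p q z z' *
              (Finset.univ.sup' Finset.univ_nonempty fun z'' : Z => |Q₀ z''|) := by
            apply Finset.sum_le_sum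
            intro i _
            rw [abs_mul, abs_of_nonneg (hP0 p q z i)]
            exact mul_le_mul_of_nonneg_left
              (Finset.le_sup' (fun z'' : Z => |Q₀ z''|) (Finset.mem_univ i)) (hP0 p q z i)
        _ = Finset.univ.sup' Finset.univ_nonempty fun z'' : Z => |Q₀ z''| := by
            rw [← Finset.sum_mul, hP1 p q z, one_mul]
    calc |r p q z + γ * ∑ z' : Z, P p q z z' * Q₀ z'|
        ≤ |r p q z| + |γ * ∑ z' : Z, P p q z z' * Q₀ z'| := abs_add_le _ _
      _ ≤ C + γ * (Finset.univ.sup' Finset.univ_nonempty fun z' : Z => |Q₀ z'|) := by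
          rw [abs_mul, abs_of_nonneg hγ0]
          exact add_le_add (hr p q z) (mul_le_mul_of_nonneg_left h1 hγ0)
  have hbf : ∀ p, BddBelow (Set.range (f p)) := by
    intro p
    refine ⟨-(C + γ * (Finset.univ.sup' Finset.univ_nonempty fun z' : Z => |Q z'|)), ?_⟩
    rintro x ⟨q, rfl⟩
    exact neg_le_of_abs_le (hbound Q p q)
  have hbg : ∀ p, BddBelow (Set.range (g p)) := by
    intro p
    refine ⟨-(C + γ * (Finset.univ.sup' Finset.univ_nonempty fun z' : Z => |Q' z'|)), ?_⟩
    rintro x ⟨q, rfl⟩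
    exact neg_le_of_abs_le (hbound Q' p q)
  have hbsg : BddAbove (Set.range fun p => ⨅ q, g p q) := by
    refine ⟨C + γ * (Finset.univ.sup' Finset.univ_nonempty fun z' : Z => |Q' z'|), ?_⟩
    rintro x ⟨p, rfl⟩
    exact le_trans (ciInf_le (hbg p) (Classical.arbitrary Adv))
      (le_of_abs_le (hbound Q' p _))
  -- pointwise estimate
  have hpt : ∀ p q, f p q ≤ g p q + γ * dist Q Q' := by
    intro p q
    have h1 : ∑ z' : Z, P p q z z' * Q z' ≤
        (∑ z' : Z, P p q z z' * Q' z') + dist Q Q' := by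
      have : ∑ z' : Z, P p q z z' * Q z' - ∑ z' : Z, P p q z z' * Q' z'
          = ∑ z' : Z, P p q z z' * (Q z' - Q' z') := by
        rw [← Finset.sum_sub_distrib]; congr 1; ext z'; ring
      have h2 : ∑ z' : Z, P p q z z' * (Q z' - Q' z') ≤ dist Q Q' := by
        calc ∑ z' : Z, P p q z z' * (Q z' - Q' z')
            ≤ ∑ z' : Z, P p q z z' * dist Q Q' := by
              apply Finset.sum_le_sum
              intro i _
              apply mul_le_mul_of_nonneg_left _ (hP0 p q z i)
              calc Q i - Q' i ≤ |Q i - Q' i| := le_abs_self _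
                _ = dist (Q i) (Q' i) := (Real.dist_eq _ _).symm
                _ ≤ dist Q Q' := dist_le_pi_dist Q Q' i
          _ = dist Q Q' := by rw [← Finset.sum_mul, hP1 p q z, one_mul]
      linarith [this ▸ h2]
    simp only [hf, hg]
    nlinarith [mul_le_mul_of_nonneg_left h1 hγ0]
  -- compare infima
  have hinf : ∀ p, (⨅ q, f p q) ≤ (⨅ q, g p q) + γ * dist Q Q' := by
    intro p
    rw [← sub_le_iff_le_add]
    apply le_ciInf
    intro q
    have := ciInf_le (hbf p) q
    linarith [hpt p q]
  apply sub_le_iff_le_add.mpr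
  apply ciSup_le
  intro p
  calc (⨅ q, f p q) ≤ (⨅ q, g p q) + γ * dist Q Q' := hinf p
    _ ≤ (⨆ p', ⨅ q, g p' q) + γ * dist Q Q' := by
        gcongr
        exact le_ciSup hbsg p
    _ = γ * dist Q Q' + ⨆ p', ⨅ q, g p' q := by ring

/-- Value iteration with the robust Harsanyi–Bellman operator converges geometrically
to the unique optimal robust value `Q*`. -/
theorem robust_harsanyi_bellman_convergence
    {Z : Type*} [Fintype Z] [Nonempty Z]
    {Pol Adv : Type*} [Nonempty Pol] [Nonempty Adv]
    (γ : ℝ) (hγ0 : 0 ≤ γ) (hγ1 : γ < 1)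
    (r : Pol → Adv → Z → ℝ) (C : ℝ)
    (hr : ∀ p q z, |r p q z| ≤ C)
    (P : Pol → Adv → Z → Z → ℝ)
    (hP0 : ∀ p q z z', 0 ≤ P p q z z')
    (hP1 : ∀ p q z, ∑ z' : Z, P p q z z' = 1)
    (T : (Z → ℝ) → (Z → ℝ))
    (hT : ∀ Q z, T Q z =
      ⨆ p : Pol, ⨅ q : Adv, (r p q z + γ * ∑ z' : Z, P p q z z' * Q z')) :
    ∃ Qstar : Z → ℝ, T Qstar = Qstar ∧
      (∀ Q : Z → ℝ, T Q = Q → Q = Qstar) ∧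
      (∀ (Q : Z → ℝ) (n : ℕ),
        (Finset.univ.sup' Finset.univ_nonempty fun z : Z => |T^[n] Q z - Qstar z|) ≤
          γ ^ n * (Finset.univ.sup' Finset.univ_nonempty fun z : Z => |Q z - Qstar z|)) ∧
      (∀ (Q : Z → ℝ) (z : Z),
        Filter.Tendsto (fun n : ℕ => T^[n] Q z) Filter.atTop (nhds (Qstar z))) := by
  -- T is Lipschitz with constant γ
  have hdist : ∀ Q Q' : Z → ℝ, dist (T Q) (T Q') ≤ γ * dist Q Q' := by
    intro Q Q'
    rw [dist_pi_le_iff (mul_nonneg hγ0 dist_nonneg)]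
    intro z
    rw [Real.dist_eq, abs_sub_le_iff, hT Q z, hT Q' z]
    exact ⟨aux_key_rhb γ hγ0 r C hr P hP0 hP1 Q Q' z, by
      rw [dist_comm]
      exact aux_key_rhb γ hγ0 r C hr P hP0 hP1 Q' Q z⟩
  have hlip : LipschitzWith ⟨γ, hγ0⟩ T := LipschitzWith.of_dist_le_mul hdist
  have hcontr : ContractingWith ⟨γ, hγ0⟩ T := ⟨by exact_mod_cast hγ1, hlip⟩
  set Qstar := hcontr.fixedPoint T with hQs
  have hfix : T Qstar = Qstar := hcontr.fixedPoint_isFixedPt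
  -- dist equals the sup'
  have hdeq : ∀ f g : Z → ℝ, dist f g =
      Finset.univ.sup' Finset.univ_nonempty fun z : Z => |f z - g z| := by
    intro f g
    apply le_antisymm
    · rw [dist_pi_le_iff]
      · intro z
        rw [Real.dist_eq]
        exact Finset.le_sup' (fun z : Z => |f z - g z|) (Finset.mem_univ z)
      · obtain ⟨z⟩ := ‹Nonempty Z›
        exact le_trans (abs_nonneg (f z - g z))
          (Finset.le_sup' (fun z : Z => |f z - g z|) (Finset.mem_univ z))
    · apply Finset.sup'_le
      intro z _
      rw [← Real.dist_eq]
      exact dist_le_pi_dist f g z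
  have hiter : ∀ (Q : Z → ℝ) (n : ℕ), dist (T^[n] Q) Qstar ≤ γ ^ n * dist Q Qstar := by
    intro Q n
    induction n with
    | zero => simp
    | succ n ih =>
      rw [Function.iterate_succ_apply']
      calc dist (T (T^[n] Q)) Qstar = dist (T (T^[n] Q)) (T Qstar) := by rw [hfix]
        _ ≤ γ * dist (T^[n] Q) Qstar := hdist _ _
        _ ≤ γ * (γ ^ n * dist Q Qstar) := by gcongr
        _ = γ ^ (n + 1) * dist Q Qstar := by ring
  refine ⟨Qstar, hfix, ?_, ?_, ?_⟩
  · intro Q hQ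
    exact hcontr.fixedPoint_unique hQ
  · intro Q n
    rw [← hdeq, ← hdeq]
    exact hiter Q n
  · intro Q z
    rw [tendsto_iff_dist_tendsto_zero]
    apply squeeze_zero (fun n => dist_nonneg)
      (fun n => le_trans (dist_le_pi_dist _ _ z) (hiter Q n))
    have : Filter.Tendsto (fun n : ℕ => γ ^ n) Filter.atTop (nhds 0) :=
      tendsto_pow_atTop_nhds_zero_of_lt_one hγ0 hγ1
    simpa using this.mul_const (dist Q Qstar)
end

section
/- Let E be a normed real vector space, let A be a finite type (the action set), let Q : A → ℝ, and let π : E → A → ℝ be such that for every a ∈ A the function y ↦ π y a is differentiable at x ∈ E and π x a > 0. Then the function y ↦ ∑_{a ∈ A} π y a · Q a is differentiable at x, and fderiv ℝ (fun y => ∑_{a ∈ A} π y a · Q a) x = ∑_{a ∈ A} (π x a · Q a) • fderiv ℝ (fun y => Real.log (π y a)) x. -/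
/-- Single-step score-function (policy gradient) identity:
`∇ ∑_a π(a) Q(a) = ∑_a π(a) Q(a) • ∇ log π(a)`. -/
theorem policy_gradient_score_function_identity
    {E : Type*} [NormedAddCommGroup E] [NormedSpace ℝ E]
    {A : Type*} [Fintype A]
    (Q : A → ℝ) (pol : E → A → ℝ) (x : E)
    (hd : ∀ a, DifferentiableAt ℝ (fun y => pol y a) x)
    (hpos : ∀ a, 0 < pol x a) :
    DifferentiableAt ℝ (fun y => ∑ a : A, pol y a * Q a) x ∧
      fderiv ℝ (fun y => ∑ a : A, pol y a * Q a) x =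
        ∑ a : A, (pol x a * Q a) • fderiv ℝ (fun y => Real.log (pol y a)) x := by
  have hdm : ∀ a, DifferentiableAt ℝ (fun y => pol y a * Q a) x :=
    fun a => (hd a).mul_const _
  refine ⟨DifferentiableAt.fun_sum fun a _ => hdm a, ?_⟩
  have hlog : ∀ a, HasFDerivAt (fun y => Real.log (pol y a))
      ((pol x a)⁻¹ • fderiv ℝ (fun y => pol y a) x) x :=
    fun a => ((hd a).hasFDerivAt).log (ne_of_gt (hpos a))
  rw [fderiv_fun_sum (fun a _ => hdm a)]
  refine Finset.sum_congr rfl fun a _ => ?_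
  rw [(hlog a).fderiv, fderiv_mul_const (hd a), smul_smul]
  congr 1
  rw [mul_comm (pol x a) (Q a), mul_assoc, mul_inv_cancel₀ (ne_of_gt (hpos a)), mul_one]
end
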